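/- Let N ≥ 1 be any multiple of m, and set x = Σ_{i=0}^{m−1} γ_i^{N} and y = Σ_{i=0}^{m−1} δ_i^{N} in E(Λ_q). Then for every n ≥ 0, the n+1 elements x^i y^{n−i}, 0 ≤ i ≤ n, are linearly independent over K in E(Λ_q). -/

import Mathlib

open scoped BigOperators

noncomputable section

/-- Generators of the path algebra: trivial paths `e i`, arrows `a i : i → i+1`
and `abar i : i+1 → i`. -/
inductive Gen (m : ℕ) : Type
  | e : ZMod m → Gen m
  | a : ZMod m → Gen m
  | abar : ZMod m → Gen m

/-- The free associative algebra on the generators. -/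
abbrev FA (K : Type) [Field K] (m : ℕ) : Type := FreeAlgebra K (Gen m)

def Ee (K : Type) [Field K] (m : ℕ) (i : ZMod m) : FA K m := FreeAlgebra.ι K (Gen.e i)
def Aa (K : Type) [Field K] (m : ℕ) (i : ZMod m) : FA K m := FreeAlgebra.ι K (Gen.a i)
def Bb (K : Type) [Field K] (m : ℕ) (i : ZMod m) : FA K m := FreeAlgebra.ι K (Gen.abar i)

/-- The defining relations of the path algebra KQ. -/
inductive PathRel (K : Type) [Field K] (m : ℕ) [NeZero m] : FA K m → FA K m → Prop
  | orth : ∀ i j : ZMod m, i ≠ j → PathRel K m (Ee K m i * Ee K m j) 0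
  | idem : ∀ i : ZMod m, PathRel K m (Ee K m i * Ee K m i) (Ee K m i)
  | total : PathRel K m (∑ i : ZMod m, Ee K m i) 1
  | asrc : ∀ i : ZMod m, PathRel K m (Ee K m i * Aa K m i) (Aa K m i)
  | atgt : ∀ i : ZMod m, PathRel K m (Aa K m i * Ee K m (i + 1)) (Aa K m i)
  | bsrc : ∀ i : ZMod m, PathRel K m (Ee K m (i + 1) * Bb K m i) (Bb K m i)
  | btgt : ∀ i : ZMod m, PathRel K m (Bb K m i * Ee K m i) (Bb K m i)

/-- The path algebra KQ. -/
abbrev PathAlg (K : Type) [Field K] (m : ℕ) [NeZero m] : Type := RingQuot (PathRel K m)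

def pe (K : Type) [Field K] (m : ℕ) [NeZero m] (i : ZMod m) : PathAlg K m :=
  RingQuot.mkAlgHom K (PathRel K m) (Ee K m i)
def pa (K : Type) [Field K] (m : ℕ) [NeZero m] (i : ZMod m) : PathAlg K m :=
  RingQuot.mkAlgHom K (PathRel K m) (Aa K m i)
def pb (K : Type) [Field K] (m : ℕ) [NeZero m] (i : ZMod m) : PathAlg K m :=
  RingQuot.mkAlgHom K (PathRel K m) (Bb K m i)

/-- The relations defining the Koszul dual (Ext algebra) of `Λ_q`:
`q_i⁻¹ a_i ā_i + ā_{i-1} a_{i-1} = 0`. -/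
inductive ExtRel (K : Type) [Field K] (m : ℕ) [NeZero m] (q : ZMod m → K) :
    PathAlg K m → PathAlg K m → Prop
  | rel : ∀ i : ZMod m,
      ExtRel K m q ((q i)⁻¹ • (pa K m i * pb K m i) + pb K m (i - 1) * pa K m (i - 1)) 0

/-- The Ext algebra `E(Λ_q)`. -/
abbrev ExtAlg (K : Type) [Field K] (m : ℕ) [NeZero m] (q : ZMod m → K) : Type :=
  RingQuot (ExtRel K m q)

def xe (K : Type) [Field K] (m : ℕ) [NeZero m] (q : ZMod m → K) (i : ZMod m) :
    ExtAlg K m q := RingQuot.mkAlgHom K (ExtRel K m q) (pe K m i)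
def xa (K : Type) [Field K] (m : ℕ) [NeZero m] (q : ZMod m → K) (i : ZMod m) :
    ExtAlg K m q := RingQuot.mkAlgHom K (ExtRel K m q) (pa K m i)
def xb (K : Type) [Field K] (m : ℕ) [NeZero m] (q : ZMod m → K) (i : ZMod m) :
    ExtAlg K m q := RingQuot.mkAlgHom K (ExtRel K m q) (pb K m i)

/-- `γ_i^n`, the image of the path `a_i a_{i+1} ⋯ a_{i+n-1}` in `E(Λ_q)`. -/
def gam (K : Type) [Field K] (m : ℕ) [NeZero m] (q : ZMod m → K) (i : ZMod m) :
    ℕ → ExtAlg K m q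
  | 0 => xe K m q i
  | n + 1 => xa K m q i * gam K m q (i + 1) n

/-- `δ_i^n`, the image of the path `ā_{i+n-1} ⋯ ā_{i+1} ā_i` in `E(Λ_q)`. -/
def del (K : Type) [Field K] (m : ℕ) [NeZero m] (q : ZMod m → K) (i : ZMod m) :
    ℕ → ExtAlg K m q
  | 0 => xe K m q i
  | n + 1 => xb K m q (i + (n : ZMod m)) * del K m q i n

/-- Homogeneity of path-length degree `n` in `E(Λ_q)`: membership in the span of
the (images of) paths of length `n`, i.e. of the monomials `γ_i^s δ_j^t` with `s + t = n`. -/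
def Homog (K : Type) [Field K] (m : ℕ) [NeZero m] (q : ZMod m → K) (n : ℕ)
    (z : ExtAlg K m q) : Prop :=
  z ∈ Submodule.span K
    {x : ExtAlg K m q | ∃ (i j : ZMod m) (s t : ℕ), s + t = n ∧ x = gam K m q i s * del K m q j t}

/-- The graded centre of `E(Λ_q)`: the subalgebra generated by all homogeneous elements `z`
of degree `n` such that `z g = (-1)^{n n'} g z` for all homogeneous `g` of degree `n'`. -/
def ZGr (K : Type) [Field K] (m : ℕ) [NeZero m] (q : ZMod m → K) :
    Subalgebra K (ExtAlg K m q) :=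
  Algebra.adjoin K
    {z : ExtAlg K m q | ∃ n : ℕ, Homog K m q n z ∧
      ∀ (n' : ℕ) (g : ExtAlg K m q), Homog K m q n' g →
        z * g = ((-1 : K) ^ (n * n')) • (g * z)}

/-- The product `q_k q_{k+1} ⋯ q_{k+len-1}` (subscripts modulo `m`). -/
def qblock (K : Type) [Field K] (m : ℕ) [NeZero m] (q : ZMod m → K) (k len : ℕ) : K :=
  ∏ j ∈ Finset.range len, q ((k + j : ℕ) : ZMod m)

/-- The coefficient `∏_{k=1}^{i} (q_k ⋯ q_{k+len-1})⁻¹`. -/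
def wcoef (K : Type) [Field K] (m : ℕ) [NeZero m] (q : ZMod m → K) (i len : ℕ) : K :=
  ∏ k ∈ Finset.Icc 1 i, (qblock K m q k len)⁻¹

namespace XYAux

variable (K : Type) [Field K] (m : ℕ) [NeZero m] (q : ZMod m → K)

/-- The module on which `ExtAlg` will act: basis indexed by normalized paths
`γ_i^s δ^t` (vertex `i`, `s` arrows `a`, `t` arrows `ā`). -/
abbrev V : Type := (ZMod m × ℕ × ℕ) →₀ K

/-- Coefficient picked up when `ā_j` is pushed past `γ_j^s`:
`(-1)^s (q_{j+1} ⋯ q_{j+s})⁻¹`. -/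
def coef (j : ZMod m) (s : ℕ) : K :=
  (-1 : K) ^ s * (∏ k ∈ Finset.range s, q (j + ((k + 1 : ℕ) : ZMod m)))⁻¹

@[simp] lemma coef_zero (j : ZMod m) : coef K m q j 0 = 1 := by
  simp [coef]

/-- Action of the generators on `V`. -/
def genMap : Gen m → Module.End K (V K m)
  | Gen.e i => Finsupp.linearCombination K
      (fun p : ZMod m × ℕ × ℕ => if p.1 = i then Finsupp.single p (1 : K) else 0)
  | Gen.a i => Finsupp.linearCombination K
      (fun p : ZMod m × ℕ × ℕ =>
        if p.1 = i + 1 then Finsupp.single (i, p.2.1 + 1, p.2.2) (1 : K) else 0)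
  | Gen.abar i => Finsupp.linearCombination K
      (fun p : ZMod m × ℕ × ℕ =>
        if p.1 = i then Finsupp.single (i + 1, p.2.1, p.2.2 + 1) (coef K m q i p.2.1) else 0)

/-- The representation of the free algebra. -/
def φ : FA K m →ₐ[K] Module.End K (V K m) := FreeAlgebra.lift K (genMap K m q)

lemma φ_e (i : ZMod m) : φ K m q (Ee K m i) = genMap K m q (Gen.e i) := by
  simp [φ, Ee, FreeAlgebra.lift_ι_apply]

lemma φ_a (i : ZMod m) : φ K m q (Aa K m i) = genMap K m q (Gen.a i) := by
  simp [φ, Aa, FreeAlgebra.lift_ι_apply]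

lemma φ_b (i : ZMod m) : φ K m q (Bb K m i) = genMap K m q (Gen.abar i) := by
  simp [φ, Bb, FreeAlgebra.lift_ι_apply]

/-- The key scalar identity making the `ExtRel` relation hold. -/
lemma qcoef_rel (i : ZMod m) (s : ℕ) :
    (q i)⁻¹ * coef K m q i s + coef K m q (i - 1) (s + 1) = 0 := by
  have h1 : ∀ k : ℕ, (i - 1) + ((k + 1 : ℕ) : ZMod m) = i + (k : ZMod m) := by
    intro k; push_cast; ring
  have h2 : (∏ k ∈ Finset.range (s + 1), q ((i - 1) + ((k + 1 : ℕ) : ZMod m)))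
      = (∏ k ∈ Finset.range s, q (i + ((k + 1 : ℕ) : ZMod m))) * q i := by
    calc (∏ k ∈ Finset.range (s + 1), q ((i - 1) + ((k + 1 : ℕ) : ZMod m)))
        = ∏ k ∈ Finset.range (s + 1), q (i + (k : ZMod m)) := by
          exact Finset.prod_congr rfl fun k _ => by rw [h1]
      _ = (∏ k ∈ Finset.range s, q (i + ((k + 1 : ℕ) : ZMod m))) * q (i + ((0 : ℕ) : ZMod m)) :=
          Finset.prod_range_succ' _ _
      _ = (∏ k ∈ Finset.range s, q (i + ((k + 1 : ℕ) : ZMod m))) * q i := by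
          norm_num
  simp only [coef, h2, pow_succ, mul_inv]
  ring

lemma endExt {f g : Module.End K (V K m)}
    (h : ∀ p : ZMod m × ℕ × ℕ, f (Finsupp.single p 1) = g (Finsupp.single p 1)) : f = g :=
  Finsupp.lhom_ext fun p b => by
    rw [← mul_one b, ← smul_eq_mul, ← Finsupp.smul_single, map_smul, map_smul, h]

lemma Eop_single (i : ZMod m) (p : ZMod m × ℕ × ℕ) :
    genMap K m q (Gen.e i) (Finsupp.single p 1) =
      if p.1 = i then Finsupp.single p 1 else 0 := by
  simp only [genMap, Finsupp.linearCombination_single, one_smul]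

lemma Aop_single (i : ZMod m) (p : ZMod m × ℕ × ℕ) :
    genMap K m q (Gen.a i) (Finsupp.single p 1) =
      if p.1 = i + 1 then Finsupp.single ((i, p.2.1 + 1, p.2.2) : ZMod m × ℕ × ℕ) 1 else 0 := by
  simp only [genMap, Finsupp.linearCombination_single, one_smul]

lemma Bop_single (i : ZMod m) (p : ZMod m × ℕ × ℕ) :
    genMap K m q (Gen.abar i) (Finsupp.single p 1) =
      if p.1 = i then
        coef K m q i p.2.1 • Finsupp.single ((i + 1, p.2.1, p.2.2 + 1) : ZMod m × ℕ × ℕ) (1 : K)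
      else 0 := by
  simp only [genMap, Finsupp.linearCombination_single, one_smul, Finsupp.smul_single,
    smul_eq_mul, mul_one]

lemma pathRel_sound : ∀ ⦃x y : FA K m⦄, PathRel K m x y → φ K m q x = φ K m q y := by
  intro x y h
  induction h with
  | orth i j hij =>
      refine endExt K m fun p => ?_
      rw [map_mul, Module.End.mul_apply, φ_e, φ_e, Eop_single, map_zero, LinearMap.zero_apply]
      by_cases h1 : p.1 = j
      · rw [if_pos h1, Eop_single, if_neg (fun h2 : p.1 = i => hij (h2.symm.trans h1))]
      · rw [if_neg h1, map_zero]
  | idem i =>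
      refine endExt K m fun p => ?_
      rw [map_mul, Module.End.mul_apply, φ_e, Eop_single]
      by_cases h1 : p.1 = i
      · rw [if_pos h1, Eop_single, if_pos h1]
      · rw [if_neg h1, map_zero]
  | total =>
      refine endExt K m fun p => ?_
      rw [map_sum, map_one, Module.End.one_apply, LinearMap.coe_sum, Finset.sum_apply]
      simp only [φ_e, Eop_single]
      rw [Finset.sum_ite_eq Finset.univ p.1 (fun _ => Finsupp.single p (1 : K))]
      simp
  | asrc i =>
      refine endExt K m fun p => ?_
      rw [map_mul, Module.End.mul_apply, φ_e, φ_a, Aop_single]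
      by_cases h1 : p.1 = i + 1
      · rw [if_pos h1, Eop_single, if_pos rfl]
      · rw [if_neg h1, map_zero]
  | atgt i =>
      refine endExt K m fun p => ?_
      rw [map_mul, Module.End.mul_apply, φ_e, φ_a, Eop_single]
      by_cases h1 : p.1 = i + 1
      · rw [if_pos h1]
      · rw [if_neg h1, map_zero, Aop_single, if_neg h1]
  | bsrc i =>
      refine endExt K m fun p => ?_
      rw [map_mul, Module.End.mul_apply, φ_e, φ_b, Bop_single]
      by_cases h1 : p.1 = i
      · rw [if_pos h1, map_smul, Eop_single, if_pos rfl]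
      · rw [if_neg h1, map_zero]
  | btgt i =>
      refine endExt K m fun p => ?_
      rw [map_mul, Module.End.mul_apply, φ_e, φ_b, Eop_single]
      by_cases h1 : p.1 = i
      · rw [if_pos h1]
      · rw [if_neg h1, map_zero, Bop_single, if_neg h1]

/-- The representation of the path algebra. -/
def φP : PathAlg K m →ₐ[K] Module.End K (V K m) :=
  RingQuot.liftAlgHom K ⟨φ K m q, pathRel_sound K m q⟩

lemma φP_e (i : ZMod m) : φP K m q (pe K m i) = genMap K m q (Gen.e i) := by
  rw [φP, pe, RingQuot.liftAlgHom_mkAlgHom_apply, φ_e]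

lemma φP_a (i : ZMod m) : φP K m q (pa K m i) = genMap K m q (Gen.a i) := by
  rw [φP, pa, RingQuot.liftAlgHom_mkAlgHom_apply, φ_a]

lemma φP_b (i : ZMod m) : φP K m q (pb K m i) = genMap K m q (Gen.abar i) := by
  rw [φP, pb, RingQuot.liftAlgHom_mkAlgHom_apply, φ_b]

lemma extRel_sound : ∀ ⦃x y : PathAlg K m⦄, ExtRel K m q x y → φP K m q x = φP K m q y := by
  intro x y h
  induction h with
  | rel i =>
      refine endExt K m fun p => ?_
      rw [map_add, map_smul, map_mul, map_mul, map_zero, LinearMap.zero_apply,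
        LinearMap.add_apply, LinearMap.smul_apply, Module.End.mul_apply, Module.End.mul_apply,
        φP_a, φP_a, φP_b, φP_b, Bop_single, Aop_single]
      have him : (i - 1 : ZMod m) + 1 = i := by ring
      by_cases h1 : p.1 = i
      · rw [if_pos h1, if_pos (him.symm ▸ h1), map_smul, Aop_single, if_pos rfl,
          Bop_single, if_pos rfl]
        simp only [smul_smul, him]
        rw [← add_smul]
        have hq0 : (q i)⁻¹ * coef K m q i p.2.1 + coef K m q (i - 1) (p.2.1 + 1) = 0 :=
          qcoef_rel K m q i p.2.1
        rw [hq0, zero_smul]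
      · rw [if_neg h1, if_neg (fun h2 => h1 (by rw [h2, him])), map_zero, map_zero,
          smul_zero, add_zero]

/-- The representation of the Ext algebra. -/
def φE : ExtAlg K m q →ₐ[K] Module.End K (V K m) :=
  RingQuot.liftAlgHom K ⟨φP K m q, extRel_sound K m q⟩

lemma φE_xe (i : ZMod m) : φE K m q (xe K m q i) = genMap K m q (Gen.e i) := by
  rw [φE, xe, RingQuot.liftAlgHom_mkAlgHom_apply, φP_e]

lemma φE_xa (i : ZMod m) : φE K m q (xa K m q i) = genMap K m q (Gen.a i) := by
  rw [φE, xa, RingQuot.liftAlgHom_mkAlgHom_apply, φP_a]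

lemma φE_xb (i : ZMod m) : φE K m q (xb K m q i) = genMap K m q (Gen.abar i) := by
  rw [φE, xb, RingQuot.liftAlgHom_mkAlgHom_apply, φP_b]

lemma gam_eval (s : ℕ) (j : ZMod m) (p : ZMod m × ℕ × ℕ) :
    φE K m q (gam K m q j s) (Finsupp.single p 1) =
      if p.1 = j + (s : ZMod m) then
        Finsupp.single ((j, p.2.1 + s, p.2.2) : ZMod m × ℕ × ℕ) (1 : K) else 0 := by
  induction s generalizing j with
  | zero =>
      rw [gam, φE_xe, Eop_single]
      simp only [Nat.cast_zero, add_zero]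
      by_cases h1 : p.1 = j
      · rw [if_pos h1, if_pos h1]
        congr 1
        exact Prod.ext h1 rfl
      · rw [if_neg h1, if_neg h1]
  | succ s ih =>
      rw [gam, map_mul, Module.End.mul_apply, ih, φE_xa]
      have hc : (p.1 = (j + 1) + (s : ZMod m)) ↔ (p.1 = j + ((s + 1 : ℕ) : ZMod m)) := by
        push_cast
        constructor <;> intro h <;> rw [h] <;> ring
      by_cases h1 : p.1 = (j + 1) + (s : ZMod m)
      · rw [if_pos h1, Aop_single, if_pos rfl, if_pos (hc.mp h1)]
        rfl
      · rw [if_neg h1, map_zero, if_neg (fun h => h1 (hc.mpr h))]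

/-- The total coefficient picked up by `δ_j^t` acting on a basis vector with `s` a-arrows. -/
def Dcoef (j : ZMod m) (t s : ℕ) : K :=
  ∏ r ∈ Finset.range t, coef K m q (j + (r : ZMod m)) s

@[simp] lemma Dcoef_zero_right (j : ZMod m) (t : ℕ) : Dcoef K m q j t 0 = 1 := by
  simp [Dcoef]

lemma del_eval (t : ℕ) (j : ZMod m) (p : ZMod m × ℕ × ℕ) :
    φE K m q (del K m q j t) (Finsupp.single p 1) =
      if p.1 = j then
        Finsupp.single ((j + (t : ZMod m), p.2.1, p.2.2 + t) : ZMod m × ℕ × ℕ)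
          (Dcoef K m q j t p.2.1)
      else 0 := by
  induction t with
  | zero =>
      rw [del, φE_xe, Eop_single]
      simp only [Nat.cast_zero, add_zero, Dcoef, Finset.range_zero, Finset.prod_empty]
      by_cases h1 : p.1 = j
      · rw [if_pos h1, if_pos h1]
        congr 1
        exact Prod.ext h1 rfl
      · rw [if_neg h1, if_neg h1]
  | succ t ih =>
      rw [del, map_mul, Module.End.mul_apply, ih, φE_xb]
      by_cases h1 : p.1 = j
      · rw [if_pos h1, if_pos h1]
        have hsm : Finsupp.single ((j + (t : ZMod m), p.2.1, p.2.2 + t) : ZMod m × ℕ × ℕ)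
            (Dcoef K m q j t p.2.1) = (Dcoef K m q j t p.2.1) •
            Finsupp.single ((j + (t : ZMod m), p.2.1, p.2.2 + t) : ZMod m × ℕ × ℕ) (1 : K) := by
          rw [Finsupp.smul_single, smul_eq_mul, mul_one]
        rw [hsm, map_smul, Bop_single, if_pos rfl, smul_smul, Finsupp.smul_single,
          smul_eq_mul, mul_one]
        have hD : Dcoef K m q j (t + 1) p.2.1
            = Dcoef K m q j t p.2.1 * coef K m q (j + (t : ZMod m)) p.2.1 :=
          Finset.prod_range_succ _ _
        rw [hD]
        congr 1
        refine Prod.ext ?_ (Prod.ext rfl ?_)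
        · show (j + (t : ZMod m)) + 1 = j + ((t + 1 : ℕ) : ZMod m)
          push_cast; ring
        · show p.2.2 + t + 1 = p.2.2 + (t + 1)
          omega
      · rw [if_neg h1, if_neg h1, map_zero]


lemma x_eval {N : ℕ} (hNm : (N : ZMod m) = 0) (p : ZMod m × ℕ × ℕ) :
    φE K m q (∑ j : ZMod m, gam K m q j N) (Finsupp.single p 1) =
      Finsupp.single (p.1, p.2.1 + N, p.2.2) (1 : K) := by
  rw [map_sum]
  rw [LinearMap.coe_sum]
  simp only [Finset.sum_apply, gam_eval, hNm, add_zero]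
  rw [Finset.sum_ite_eq Finset.univ p.1
    (fun j => Finsupp.single ((j, p.2.1 + N, p.2.2) : ZMod m × ℕ × ℕ) (1 : K))]
  simp

lemma y_eval {N : ℕ} (hNm : (N : ZMod m) = 0) (p : ZMod m × ℕ × ℕ) :
    φE K m q (∑ j : ZMod m, del K m q j N) (Finsupp.single p 1) =
      Finsupp.single (p.1, p.2.1, p.2.2 + N) (Dcoef K m q p.1 N p.2.1) := by
  rw [map_sum, LinearMap.coe_sum]
  simp only [Finset.sum_apply, del_eval, hNm, add_zero]
  rw [Finset.sum_ite_eq Finset.univ p.1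
    (fun j => Finsupp.single ((j, p.2.1, p.2.2 + N) : ZMod m × ℕ × ℕ) (Dcoef K m q j N p.2.1))]
  simp

lemma ypow_eval {N : ℕ} (hNm : (N : ZMod m) = 0) (k : ℕ) :
    φE K m q ((∑ j : ZMod m, del K m q j N) ^ k)
        (Finsupp.single ((0 : ZMod m), 0, 0) 1) =
      Finsupp.single ((0 : ZMod m), 0, N * k) (1 : K) := by
  induction k with
  | zero => simp
  | succ k ih =>
      rw [pow_succ']
      rw [map_mul, Module.End.mul_apply, ih, y_eval K m q hNm]
      simp only [Dcoef_zero_right]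
      rfl

lemma xpow_eval {N : ℕ} (hNm : (N : ZMod m) = 0) (i u : ℕ) :
    φE K m q ((∑ j : ZMod m, gam K m q j N) ^ i)
        (Finsupp.single ((0 : ZMod m), 0, u) 1) =
      Finsupp.single ((0 : ZMod m), N * i, u) (1 : K) := by
  induction i with
  | zero => simp
  | succ i ih =>
      rw [pow_succ']
      rw [map_mul, Module.End.mul_apply, ih, x_eval K m q hNm]
      rfl

/-- Evaluation of the representation at the basis vector `(0,0,0)`. -/
def evalMap : ExtAlg K m q →ₗ[K] V K m where
  toFun z := φE K m q z (Finsupp.single ((0 : ZMod m), 0, 0) 1)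
  map_add' a b := by simp only [map_add, LinearMap.add_apply]
  map_smul' c a := by simp only [map_smul, LinearMap.smul_apply, RingHom.id_apply]

lemma lin_indep_of_eval {ι : Type} (w : ι → ExtAlg K m q) (g : ι → ZMod m × ℕ × ℕ)
    (hg : Function.Injective g)
    (hw : ∀ i, evalMap K m q (w i) = Finsupp.single (g i) 1) :
    LinearIndependent K w := by
  have hiff := @linearIndependent_iff' ι K (ExtAlg K m q) _ _ _ w
  apply hiff.mpr
  intro s c hsum i hi
  have h2 := congrArg (evalMap K m q) hsum
  rw [map_sum, map_zero] at h2
  simp only [map_smul, hw] at h2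
  have h3 := congrArg (fun v : V K m => v (g i)) h2
  simp only [Finsupp.finset_sum_apply, Finsupp.smul_apply, Finsupp.single_apply,
    Finsupp.coe_zero, Pi.zero_apply, smul_eq_mul, mul_ite, mul_one, mul_zero] at h3
  rwa [Finset.sum_eq_single i
    (fun j _ hji => if_neg (fun he => hji (hg he)))
    (fun his => absurd hi his), if_pos rfl] at h3

end XYAux

/-- for `N ≥ 1` a multiple of `m`, with `x = Σ_i γ_i^N` and `y = Σ_i δ_i^N`,
the elements `x^i y^{n-i}` (`0 ≤ i ≤ n`) are linearly independent over `K` in `E(Λ_q)`. -/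
theorem powers_xy_linearly_independent
    (K : Type) [Field K] (m : ℕ) [NeZero m] (hm : 1 ≤ m)
    (q : ZMod m → K) (hq : ∀ i, q i ≠ 0)
    (N : ℕ) (hN1 : 1 ≤ N) (hNm : m ∣ N) (n : ℕ) :
    LinearIndependent K (fun i : Fin (n + 1) =>
      (∑ j : ZMod m, gam K m q j N) ^ (i : ℕ) *
        (∑ j : ZMod m, del K m q j N) ^ (n - (i : ℕ))) := by
  classical
  have hN0 : (N : ZMod m) = 0 := (ZMod.natCast_eq_zero_iff N m).mpr hNm
  refine XYAux.lin_indep_of_eval K m q _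
    (fun i : Fin (n + 1) => (((0 : ZMod m), N * (i : ℕ), N * (n - (i : ℕ))) : ZMod m × ℕ × ℕ))
    ?_ ?_
  · intro i j h
    simp only [Prod.mk.injEq, true_and] at h
    exact Fin.ext (Nat.eq_of_mul_eq_mul_left hN1 h.1)
  · intro i
    show XYAux.φE K m q ((∑ j : ZMod m, gam K m q j N) ^ (i : ℕ) *
        (∑ j : ZMod m, del K m q j N) ^ (n - (i : ℕ)))
        (Finsupp.single ((0 : ZMod m), 0, 0) 1) = _
    rw [map_mul, Module.End.mul_apply, XYAux.ypow_eval K m q hN0,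
      XYAux.xpow_eval K m q hN0]
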